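/- For X ⊆ 2^ω, the game G^γ_{F,C}(X) is equivalent to the neighborhood game G^f_{O,P}(X_F, ∞) on the space X_F: player O has a winning strategy in one iff F has one in the other, and P has a winning strategy iff C does; concretely, neighborhoods of ∞ in X_F correspond to finite subsets F ⊆ X via the set 2^{<ω} \ {x↾n : x ∈ F, n < ω}, and finite sets P_n ⊆ 2^{<ω} correspond to clopen sets C_n = 2^ω \ ⋃{[s] : s ∈ P_n}, with the convergence condition for ⟨P_n⟩ equivalent to ⟨C_n⟩ being a γ-cover of X. -/

import Mathlib

open Filter Set

/-- The initial segment `x ↾ n` of `x : 2^ω`, as an element of `2^{<ω}`. -/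
def initSeg (x : ℕ → Bool) (n : ℕ) : List Bool := (List.range n).map x

/-- The topology on `X_F = 2^{<ω} ∪ {∞}` (here `∞ = none`): every `σ ∈ 2^{<ω}` is
isolated, and basic neighborhoods of `∞` are complements of the sets of initial
segments of finitely many elements of `X`. -/
def XFtop (X : Set (ℕ → Bool)) : TopologicalSpace (Option (List Bool)) :=
  TopologicalSpace.generateFrom
    ({s | ∃ σ : List Bool, s = {some σ}} ∪
     {s | ∃ F : Set (ℕ → Bool), F ⊆ X ∧ F.Finite ∧
        s = insert none
          {p | ∃ σ : List Bool, p = some σ ∧ ¬ ∃ x ∈ F, ∃ n : ℕ, σ = initSeg x n}})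

def IsGammaCover (X : Set (ℕ → Bool)) (V : ℕ → Set (ℕ → Bool)) : Prop :=
  (∀ n, IsOpen (V n)) ∧ ∀ x ∈ X, ∀ᶠ n in atTop, x ∈ V n

/-! Strategies in the game `G^γ_{F,C}(X)`. -/

/-- F's `n`-th move using strategy `σ` against C's previous moves `c 0, …, c (n-1)`. -/
def FmoveOf (σ : List (Set (ℕ → Bool)) → Set (ℕ → Bool)) (c : ℕ → Set (ℕ → Bool))
    (n : ℕ) : Set (ℕ → Bool) :=
  σ ((List.range n).map c)

/-- C's `n`-th move using strategy `σ` against F's moves `F 0, …, F n`. -/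
def CmoveOf (σ : List (Set (ℕ → Bool)) → Set (ℕ → Bool)) (F : ℕ → Set (ℕ → Bool))
    (n : ℕ) : Set (ℕ → Bool) :=
  σ ((List.range (n + 1)).map F)

def WinningForF (X : Set (ℕ → Bool)) (σ : List (Set (ℕ → Bool)) → Set (ℕ → Bool)) : Prop :=
  ∀ c : ℕ → Set (ℕ → Bool),
    (∀ n, (FmoveOf σ c n).Finite ∧ FmoveOf σ c n ⊆ X) ∧
    ((∀ n, IsClopen (c n) ∧ FmoveOf σ c n ⊆ c n) → IsGammaCover X c)

def WinningForC (X : Set (ℕ → Bool)) (σ : List (Set (ℕ → Bool)) → Set (ℕ → Bool)) : Prop :=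
  ∀ F : ℕ → Set (ℕ → Bool), (∀ n, (F n).Finite ∧ F n ⊆ X) →
    (∀ n, IsClopen (CmoveOf σ F n) ∧ F n ⊆ CmoveOf σ F n) ∧
    ¬ IsGammaCover X (CmoveOf σ F)

/-! Strategies in the neighborhood game `G^f_{O,P}(β, y)` for a topology `t` on `β`. -/

/-- O's `n`-th move against P's previous moves. -/
def OmoveOf {β : Type*} (σ : List (Set β) → Set β) (p : ℕ → Set β) (n : ℕ) : Set β :=
  σ ((List.range n).map p)

/-- P's `n`-th move against O's moves `u 0, …, u n`. -/
def PmoveOf {β : Type*} (σ : List (Set β) → Set β) (u : ℕ → Set β) (n : ℕ) : Set β :=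
  σ ((List.range (n + 1)).map u)

/-- The sequence of finite sets `p n` converges to `y`: every open neighborhood of `y`
contains `p n` for all but finitely many `n`. -/
def ConvergesTo {β : Type*} (t : TopologicalSpace β) (y : β) (p : ℕ → Set β) : Prop :=
  ∀ V : Set β, t.IsOpen V → y ∈ V → ∀ᶠ n in atTop, p n ⊆ V

def WinningForO {β : Type*} (t : TopologicalSpace β) (y : β)
    (σ : List (Set β) → Set β) : Prop :=
  ∀ p : ℕ → Set β,
    (∀ n, t.IsOpen (OmoveOf σ p n) ∧ y ∈ OmoveOf σ p n) ∧
    ((∀ n, (p n).Finite ∧ p n ⊆ OmoveOf σ p n \ {y}) → ConvergesTo t y p)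

def WinningForP {β : Type*} (t : TopologicalSpace β) (y : β)
    (σ : List (Set β) → Set β) : Prop :=
  ∀ u : ℕ → Set β, (∀ n, t.IsOpen (u n) ∧ y ∈ u n) →
    (∀ n, (PmoveOf σ u n).Finite ∧ PmoveOf σ u n ⊆ u n \ {y}) ∧
    ¬ ConvergesTo t y (PmoveOf σ u)

/-! ### Auxiliary lemmas -/

lemma initSeg_length (x : ℕ → Bool) (n : ℕ) : (initSeg x n).length = n := by
  simp [initSeg]

lemma initSeg_eq_iff {x y : ℕ → Bool} {n : ℕ} :
    initSeg x n = initSeg y n ↔ ∀ i < n, x i = y i := by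
  simp [initSeg, List.map_eq_map_iff]

lemma isOpen_cyl (x : ℕ → Bool) (n : ℕ) :
    IsOpen {y : ℕ → Bool | ∀ i < n, y i = x i} := by
  have : {y : ℕ → Bool | ∀ i < n, y i = x i} =
      ⋂ i ∈ Finset.range n, (fun y : ℕ → Bool => y i) ⁻¹' {x i} := by
    ext y; simp
  rw [this]
  exact isOpen_biInter_finset fun i _ =>
    (continuous_apply i).isOpen_preimage _ (isOpen_discrete _)

/-- A clopen subset of `2^ω` is determined by finitely many coordinates. -/
lemma clopen_determined {c : Set (ℕ → Bool)} (hc : IsClopen c) :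
    ∃ n, ∀ x y : ℕ → Bool, initSeg x n = initSeg y n → (x ∈ c ↔ y ∈ c) := by
  -- for each x ∈ c, find a cylinder around x inside c
  have key : ∀ x ∈ c, ∃ n, {y : ℕ → Bool | ∀ i < n, y i = x i} ⊆ c := by
    intro x hx
    obtain ⟨I, u, hIu, hsub⟩ := isOpen_pi_iff.1 hc.isOpen x hx
    refine ⟨(I.sup id) + 1, fun y hy => hsub ?_⟩
    intro i hi
    have : y i = x i := hy i (Nat.lt_succ_of_le (Finset.le_sup (f := id) hi))
    exact this ▸ (hIu i hi).2
  -- extract cylinder widths, use compactness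
  choose! m hm using key
  have hcover : c ⊆ ⋃ x : c, {y : ℕ → Bool | ∀ i < m x, y i = (x : ℕ → Bool) i} := by
    intro x hx
    exact Set.mem_iUnion.2 ⟨⟨x, hx⟩, fun i _ => rfl⟩
  obtain ⟨t, ht⟩ := (hc.isClosed.isCompact).elim_finite_subcover
    (fun x : c => {y : ℕ → Bool | ∀ i < m x, y i = (x : ℕ → Bool) i})
    (fun x => isOpen_cyl _ _) hcover
  refine ⟨(t.sup fun x => m x), fun x y hxy => ?_⟩
  rw [initSeg_eq_iff] at hxy
  have main : ∀ x y : ℕ → Bool, (∀ i < t.sup fun x => m x, x i = y i) → x ∈ c → y ∈ c := by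
    intro x y hxy hx
    obtain ⟨z, hz, hxz⟩ := Set.mem_iUnion₂.1 (ht hx)
    refine hm z z.2 ?_
    intro i hi
    have h1 : x i = y i := hxy i (lt_of_lt_of_le hi (Finset.le_sup (s := t) (f := fun x : c => m ↑x) hz))
    exact h1 ▸ hxz i hi
  exact ⟨main x y hxy, main y x fun i hi => (hxy i hi).symm⟩

/-- Neighborhood of `∞` determined by a finite set `F ⊆ X`. -/
def toU (F : Set (ℕ → Bool)) : Set (Option (List Bool)) :=
  insert none
    {p | ∃ σ : List Bool, p = some σ ∧ ¬ ∃ x ∈ F, ∃ n : ℕ, σ = initSeg x n}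

/-- Clopen subset of `2^ω` determined by a set of strings. -/
def toC (p : Set (Option (List Bool))) : Set (ℕ → Bool) :=
  {x | ∀ n : ℕ, some (initSeg x n) ∉ p}

open Classical in
/-- Determinacy length of a set `c ⊆ 2^ω`. -/
noncomputable def detLen (c : Set (ℕ → Bool)) : ℕ :=
  if h : ∃ n, ∀ x y : ℕ → Bool, initSeg x n = initSeg y n → (x ∈ c ↔ y ∈ c)
  then h.choose else 0

lemma detLen_spec {c : Set (ℕ → Bool)} (hc : IsClopen c) :
    ∀ x y : ℕ → Bool, initSeg x (detLen c) = initSeg y (detLen c) → (x ∈ c ↔ y ∈ c) := by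
  have h := clopen_determined hc
  rw [detLen, dif_pos h]
  exact h.choose_spec

open Classical in
/-- Finite set of strings describing the complement of `c`. -/
noncomputable def toP (c : Set (ℕ → Bool)) : Set (Option (List Bool)) :=
  (fun x => some (initSeg x (detLen c))) '' cᶜ

lemma toP_finite (c : Set (ℕ → Bool)) : (toP c).Finite := by
  apply Set.Finite.subset
    (((List.finite_length_eq Bool (detLen c)).image some))
  rintro _ ⟨x, _, rfl⟩
  exact ⟨initSeg x (detLen c), initSeg_length x _, rfl⟩

lemma none_not_mem_toP (c : Set (ℕ → Bool)) : none ∉ toP c := by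
  rintro ⟨x, _, h⟩; exact Option.some_ne_none _ h

lemma mem_toP_iff {c : Set (ℕ → Bool)} (hc : IsClopen c) {x : ℕ → Bool} {m : ℕ} :
    some (initSeg x m) ∈ toP c ↔ m = detLen c ∧ x ∉ c := by
  constructor
  · rintro ⟨y, hy, h⟩
    have h' : initSeg y (detLen c) = initSeg x m := by
      simpa using h
    have hlen : detLen c = m := by
      have := congrArg List.length h'
      simpa [initSeg_length] using this
    subst hlen
    exact ⟨rfl, fun hx => hy ((detLen_spec hc y x h').2 hx)⟩
  · rintro ⟨rfl, hx⟩
    exact ⟨x, hx, rfl⟩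

open Classical in
/-- Extract a finite `F ⊆ X` whose basic neighborhood sits inside `V`. -/
noncomputable def toF (X : Set (ℕ → Bool)) (V : Set (Option (List Bool))) :
    Set (ℕ → Bool) :=
  if h : ∃ F, F ⊆ X ∧ F.Finite ∧ toU F ⊆ V then h.choose else ∅

lemma toF_finite_subset (X : Set (ℕ → Bool)) (V : Set (Option (List Bool))) :
    (toF X V).Finite ∧ toF X V ⊆ X := by
  rw [toF]
  split
  · next h => exact ⟨h.choose_spec.2.1, h.choose_spec.1⟩
  · simp

lemma isOpen_toU {X F : Set (ℕ → Bool)} (hFX : F ⊆ X) (hF : F.Finite) :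
    (XFtop X).IsOpen (toU F) :=
  TopologicalSpace.GenerateOpen.basic _ (Or.inr ⟨F, hFX, hF, rfl⟩)

lemma exists_toU_subset {X : Set (ℕ → Bool)} {V : Set (Option (List Bool))}
    (hV : (XFtop X).IsOpen V) (hnV : none ∈ V) :
    ∃ F, F ⊆ X ∧ F.Finite ∧ toU F ⊆ V := by
  induction hV with
  | basic s hs =>
    rcases hs with ⟨σ, rfl⟩ | ⟨F, hFX, hF, rfl⟩
    · simp at hnV
    · exact ⟨F, hFX, hF, subset_rfl⟩
  | univ => exact ⟨∅, empty_subset _, finite_empty, subset_univ _⟩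
  | inter s t _ _ ihs iht =>
    obtain ⟨F1, h1, hf1, hs1⟩ := ihs hnV.1
    obtain ⟨F2, h2, hf2, hs2⟩ := iht hnV.2
    refine ⟨F1 ∪ F2, union_subset h1 h2, hf1.union hf2, subset_inter ?_ ?_⟩
    · refine Subset.trans ?_ hs1
      rintro p (rfl | ⟨σ, rfl, hσ⟩)
      · exact Or.inl rfl
      · exact Or.inr ⟨σ, rfl, fun ⟨x, hx, hn⟩ => hσ ⟨x, Or.inl hx, hn⟩⟩
    · refine Subset.trans ?_ hs2
      rintro p (rfl | ⟨σ, rfl, hσ⟩)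
      · exact Or.inl rfl
      · exact Or.inr ⟨σ, rfl, fun ⟨x, hx, hn⟩ => hσ ⟨x, Or.inr hx, hn⟩⟩
  | sUnion S _ ih =>
    obtain ⟨s, hs, hns⟩ := hnV
    obtain ⟨F, h1, h2, h3⟩ := ih s hs hns
    exact ⟨F, h1, h2, h3.trans (subset_sUnion_of_mem hs)⟩

lemma toF_spec {X : Set (ℕ → Bool)} {V : Set (Option (List Bool))}
    (hV : (XFtop X).IsOpen V) (hnV : none ∈ V) : toU (toF X V) ⊆ V := by
  have h := exists_toU_subset hV hnV
  rw [toF, dif_pos h]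
  exact h.choose_spec.2.2



lemma isOpen_initSeg_mem (n : ℕ) (S : Set (List Bool)) :
    IsOpen {x : ℕ → Bool | initSeg x n ∈ S} := by
  have : {x : ℕ → Bool | initSeg x n ∈ S} =
      ⋃ x ∈ {x : ℕ → Bool | initSeg x n ∈ S}, {y | ∀ i < n, y i = x i} := by
    ext y
    constructor
    · intro hy; exact Set.mem_biUnion hy fun i _ => rfl
    · rintro ⟨s, ⟨x, rfl⟩, hs⟩
      simp only [Set.mem_iUnion, mem_setOf_eq] at hs
      obtain ⟨hx, hyx⟩ := hs
      have : initSeg y n = initSeg x n := initSeg_eq_iff.2 hyx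
      simpa [this] using hx
  rw [this]
  exact isOpen_biUnion fun x _ => isOpen_cyl x n

lemma isClopen_initSeg_mem (n : ℕ) (S : Set (List Bool)) :
    IsClopen {x : ℕ → Bool | initSeg x n ∈ S} := by
  refine ⟨⟨?_⟩, isOpen_initSeg_mem n S⟩
  have : {x : ℕ → Bool | initSeg x n ∈ S}ᶜ = {x : ℕ → Bool | initSeg x n ∈ Sᶜ} := rfl
  rw [this]
  exact isOpen_initSeg_mem n Sᶜ

lemma isClopen_toC {p : Set (Option (List Bool))} (hp : p.Finite) (hn : none ∉ p) :
    IsClopen (toC p) := by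
  have hsfin : {σ : List Bool | some σ ∈ p}.Finite :=
    hp.preimage (Option.some_injective _).injOn
  have heq : toC p = ⋂ σ ∈ {σ : List Bool | some σ ∈ p},
      {x : ℕ → Bool | initSeg x σ.length ∈ ({σ}ᶜ : Set (List Bool))} := by
    ext x
    simp only [toC, mem_setOf_eq, Set.mem_iInter, Set.mem_compl_iff, Set.mem_singleton_iff]
    constructor
    · intro h σ hσ hlen
      exact h σ.length (by rwa [hlen])
    · intro h m hm
      exact h (initSeg x m) hm (by rw [initSeg_length])
  rw [heq]
  exact hsfin.isClopen_biInter fun σ _ => isClopen_initSeg_mem _ _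

lemma none_mem_toU (F : Set (ℕ → Bool)) : none ∈ toU F := Or.inl rfl

lemma mem_toU_iff {F : Set (ℕ → Bool)} {σ : List Bool} :
    some σ ∈ toU F ↔ ¬ ∃ x ∈ F, ∃ n : ℕ, σ = initSeg x n := by
  constructor
  · rintro (h | ⟨τ, hτ, h⟩)
    · exact absurd h (by simp)
    · obtain rfl : σ = τ := by injection hτ
      exact h
  · intro h; exact Or.inr ⟨σ, rfl, h⟩

lemma convergesTo_iff {X : Set (ℕ → Bool)} {p : ℕ → Set (Option (List Bool))}
    (hnone : ∀ n, none ∉ p n) :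
    ConvergesTo (XFtop X) none p ↔
      ∀ x ∈ X, ∀ᶠ n in atTop, ∀ m : ℕ, some (initSeg x m) ∉ p n := by
  constructor
  · intro h x hx
    have hV := h (toU {x}) (isOpen_toU (singleton_subset_iff.2 hx) (finite_singleton x))
      (none_mem_toU _)
    filter_upwards [hV] with n hn m hm
    have := mem_toU_iff.1 (hn hm)
    exact this ⟨x, rfl, m, rfl⟩
  · intro h V hV hnV
    obtain ⟨G, hGX, hGfin, hGV⟩ := exists_toU_subset hV hnV
    have hall : ∀ᶠ n in atTop, ∀ x ∈ G, ∀ m : ℕ, some (initSeg x m) ∉ p n :=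
      (eventually_all_finite hGfin).2 fun x hx => h x (hGX hx)
    filter_upwards [hall] with n hn q hq
    apply hGV
    match q with
    | none => exact absurd hq (hnone n)
    | some σ =>
      refine mem_toU_iff.2 ?_
      rintro ⟨x, hxG, m, rfl⟩
      exact hn x hxG m hq



lemma toP_subset_toU {c : Set (ℕ → Bool)} (hc : IsClopen c) {G : Set (ℕ → Bool)}
    (hG : G ⊆ c) : toP c ⊆ toU G := by
  rintro _ ⟨y, hy, rfl⟩
  refine mem_toU_iff.2 ?_
  rintro ⟨x, hxG, m, heq⟩
  have hlen : detLen c = m := by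
    have := congrArg List.length heq
    simpa [initSeg_length] using this
  subst hlen
  exact hy ((detLen_spec hc y x heq).2 (hG hxG))

lemma mem_toC_toP {c : Set (ℕ → Bool)} (hc : IsClopen c) {x : ℕ → Bool} :
    x ∈ toC (toP c) ↔ x ∈ c := by
  constructor
  · intro h
    by_contra hx
    exact h (detLen c) ((mem_toP_iff hc).2 ⟨rfl, hx⟩)
  · intro hx m hm
    exact ((mem_toP_iff hc).1 hm).2 hx


theorem gamma_game_equivalent_to_neighborhood_game
    (X : Set (ℕ → Bool)) :
    ((∃ σ, WinningForF X σ) ↔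
      (∃ σ : List (Set (Option (List Bool))) → Set (Option (List Bool)),
        WinningForO (XFtop X) none σ)) ∧
    ((∃ σ, WinningForC X σ) ↔
      (∃ σ : List (Set (Option (List Bool))) → Set (Option (List Bool)),
        WinningForP (XFtop X) none σ)) := by
  constructor
  · constructor
    · -- F winning → O winning
      rintro ⟨σF, hσF⟩
      refine ⟨fun l => toU (σF (l.map toC)), ?_⟩
      intro p
      set c : ℕ → Set (ℕ → Bool) := fun k => toC (p k) with hc
      have hmove : ∀ n, OmoveOf (fun l => toU (σF (l.map toC))) p n
          = toU (FmoveOf σF c n) := by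
        intro n
        simp [OmoveOf, FmoveOf, List.map_map, Function.comp_def, hc]
      obtain ⟨hFval, hFwin⟩ := hσF c
      constructor
      · intro n
        rw [hmove]
        exact ⟨isOpen_toU (hFval n).2 (hFval n).1, none_mem_toU _⟩
      · intro hp
        have hnone : ∀ n, none ∉ p n := fun n h => ((hp n).2 h).2 rfl
        have hcover : IsGammaCover X c := by
          apply hFwin
          intro n
          refine ⟨isClopen_toC (hp n).1 (hnone n), fun x hx m hm => ?_⟩
          have := ((hp n).2 hm).1
          rw [hmove] at this
          exact mem_toU_iff.1 this ⟨x, hx, m, rfl⟩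
        exact (convergesTo_iff hnone).2 fun x hx => hcover.2 x hx
    · -- O winning → F winning
      rintro ⟨σO, hσO⟩
      refine ⟨fun l => toF X (σO (l.map toP)), ?_⟩
      intro c
      set p : ℕ → Set (Option (List Bool)) := fun k => toP (c k) with hpdef
      have hmove : ∀ n, FmoveOf (fun l => toF X (σO (l.map toP))) c n
          = toF X (OmoveOf σO p n) := by
        intro n
        simp [OmoveOf, FmoveOf, List.map_map, Function.comp_def, hpdef]
      obtain ⟨hOval, hOwin⟩ := hσO p
      constructor
      · intro n
        rw [hmove]
        exact toF_finite_subset X _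
      · intro hcval
        have hpval : ∀ n, (p n).Finite ∧ p n ⊆ OmoveOf σO p n \ {none} := by
          intro n
          refine ⟨toP_finite _, fun q hq => ⟨?_, ?_⟩⟩
          · apply toF_spec (hOval n).1 (hOval n).2
            have hsub : toF X (OmoveOf σO p n) ⊆ c n := by
              rw [← hmove]; exact (hcval n).2
            exact toP_subset_toU (hcval n).1 hsub hq
          · intro hq'
            rw [Set.mem_singleton_iff] at hq'
            subst hq'
            exact none_not_mem_toP _ hq
        have hconv := hOwin hpval
        have hnone : ∀ n, none ∉ p n := fun n => none_not_mem_toP _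
        refine ⟨fun n => (hcval n).1.isOpen, fun x hx => ?_⟩
        filter_upwards [(convergesTo_iff hnone).1 hconv x hx] with n hn
        by_contra hxc
        exact hn (detLen (c n)) ((mem_toP_iff (hcval n).1).2 ⟨rfl, hxc⟩)
  · constructor
    · -- C winning → P winning
      rintro ⟨σC, hσC⟩
      refine ⟨fun l => toP (σC (l.map (toF X))), ?_⟩
      intro u hu
      set F : ℕ → Set (ℕ → Bool) := fun k => toF X (u k) with hFdef
      have hmove : ∀ n, PmoveOf (fun l => toP (σC (l.map (toF X)))) u n
          = toP (CmoveOf σC F n) := by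
        intro n
        simp [PmoveOf, CmoveOf, List.map_map, Function.comp_def, hFdef]
      obtain ⟨hCval, hCnc⟩ := hσC F fun n => toF_finite_subset X (u n)
      constructor
      · intro n
        rw [hmove]
        refine ⟨toP_finite _, fun q hq => ⟨?_, ?_⟩⟩
        · apply toF_spec (hu n).1 (hu n).2
          exact toP_subset_toU (hCval n).1 (hCval n).2 hq
        · intro hq'
          rw [Set.mem_singleton_iff] at hq'
          subst hq'
          exact none_not_mem_toP _ hq
      · intro hconv
        apply hCnc
        refine ⟨fun n => (hCval n).1.isOpen, fun x hx => ?_⟩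
        have hconv' : ConvergesTo (XFtop X) none (fun n => toP (CmoveOf σC F n)) := by
          have : (fun n => toP (CmoveOf σC F n))
              = PmoveOf (fun l => toP (σC (l.map (toF X)))) u := funext fun n => (hmove n).symm
          rw [this]; exact hconv
        have hnone : ∀ n, none ∉ toP (CmoveOf σC F n) := fun n => none_not_mem_toP _
        filter_upwards [(convergesTo_iff hnone).1 hconv' x hx] with n hn
        by_contra hxc
        exact hn (detLen (CmoveOf σC F n)) ((mem_toP_iff (hCval n).1).2 ⟨rfl, hxc⟩)
    · -- P winning → C winning
      rintro ⟨σP, hσP⟩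
      refine ⟨fun l => toC (σP (l.map toU)), ?_⟩
      intro F hF
      set u : ℕ → Set (Option (List Bool)) := fun k => toU (F k) with hudef
      have hmove : ∀ n, CmoveOf (fun l => toC (σP (l.map toU))) F n
          = toC (PmoveOf σP u n) := by
        intro n
        simp [PmoveOf, CmoveOf, List.map_map, Function.comp_def, hudef]
      obtain ⟨hPval, hPnc⟩ := hσP u fun n =>
        ⟨isOpen_toU (hF n).2 (hF n).1, none_mem_toU _⟩
      have hnone : ∀ n, none ∉ PmoveOf σP u n := fun n h => ((hPval n).2 h).2 rfl
      constructor
      · intro n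
        rw [hmove]
        refine ⟨isClopen_toC (hPval n).1 (hnone n), fun x hx m hm => ?_⟩
        have := ((hPval n).2 hm).1
        exact mem_toU_iff.1 this ⟨x, hx, m, rfl⟩
      · intro hcover
        apply hPnc
        refine (convergesTo_iff hnone).2 fun x hx => ?_
        filter_upwards [hcover.2 x hx] with n hn
        rwa [hmove] at hn
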